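/- Let V be a nonsingular Seifert matrix with symmetric form Q = V + V^t and T = V^{-1}V^t. Then det(Q) = Δ_T(1)·Δ_T(-1) in Q^*/(Q^*)^2, i.e., det(V + V^t) equals Δ_T(1)Δ_T(-1) up to a nonzero rational square. -/

import Mathlib

open Matrix Polynomial

lemma charpoly_eval {n : ℕ} (A : Matrix (Fin n) (Fin n) ℝ) (a : ℝ) :
    A.charpoly.eval a = (a • (1 : Matrix (Fin n) (Fin n) ℝ) - A).det := by
  have h2 : A.charmatrix.map (evalRingHom a) = a • (1 : Matrix (Fin n) (Fin n) ℝ) - A := by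
    ext i j
    by_cases hij : i = j <;>
      simp [charmatrix_apply, Matrix.map_apply, Matrix.one_apply, hij, Matrix.diagonal_apply]
  rw [Matrix.charpoly, ← coe_evalRingHom, RingHom.map_det, RingHom.mapMatrix_apply, h2]

lemma skew_det_nonneg {n : ℕ} (A : Matrix (Fin n) (Fin n) ℝ) (hA : Aᵀ = -A) :
    0 ≤ A.det := by
  by_contra hlt
  push_neg at hlt
  rcases Nat.even_or_odd n with hn | hn
  · have hn0 : 0 < n := by
      rcases Nat.eq_zero_or_pos n with h | h
      · exfalso; subst h; simp [Matrix.det_fin_zero] at hlt; linarith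
      · exact h
    set p := A.charpoly with hp
    have hmono : p.Monic := A.charpoly_monic
    have hdeg : p.natDegree = n := by rw [hp, A.charpoly_natDegree_eq_dim, Fintype.card_fin]
    have h0 : p.eval 0 = A.det := by
      rw [charpoly_eval]
      simp only [zero_smul, zero_sub, Matrix.det_neg, Fintype.card_fin]
      rw [hn.neg_one_pow, one_mul]
    -- p tends to infinity
    have hdegpos : 0 < p.degree := by
      rw [degree_eq_natDegree hmono.ne_zero, hdeg]
      exact_mod_cast hn0
    have htop := p.tendsto_atTop_of_leadingCoeff_nonneg hdegpos (by rw [hmono.leadingCoeff]; norm_num)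
    obtain ⟨b, hb⟩ := (htop.eventually_ge_atTop 1).exists_forall_of_atTop
    have hb0 : (0:ℝ) ≤ max b 0 := le_max_right _ _
    have hbval : 0 ≤ p.eval (max b 0) := le_trans zero_le_one (hb _ (le_max_left _ _))
    have hcont : ContinuousOn (fun x => p.eval x) (Set.Icc 0 (max b 0)) :=
      (Polynomial.continuous p).continuousOn
    have hmem : (0:ℝ) ∈ Set.Icc (p.eval 0) (p.eval (max b 0)) :=
      ⟨by rw [h0]; exact hlt.le, hbval⟩
    obtain ⟨t₀, ht₀mem, ht₀⟩ := intermediate_value_Icc hb0 hcont hmem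
    -- eigenvector
    have hdet0 : (t₀ • (1 : Matrix (Fin n) (Fin n) ℝ) - A).det = 0 := by
      rw [← charpoly_eval]; exact ht₀
    obtain ⟨v, hv, hvec⟩ := (Matrix.exists_mulVec_eq_zero_iff).2 hdet0
    have hAv : A.mulVec v = t₀ • v := by
      have := hvec
      rw [Matrix.sub_mulVec, Matrix.smul_mulVec, Matrix.one_mulVec, sub_eq_zero] at this
      exact this.symm
    have h1 : v ⬝ᵥ A.mulVec v = t₀ * (v ⬝ᵥ v) := by
      rw [hAv, dotProduct_smul, smul_eq_mul]
    have h2 : v ⬝ᵥ A.mulVec v = -(t₀ * (v ⬝ᵥ v)) := by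
      rw [Matrix.dotProduct_mulVec, ← Matrix.mulVec_transpose, hA, Matrix.neg_mulVec, hAv]
      simp [neg_dotProduct, smul_dotProduct, smul_eq_mul]
    have hvv : v ⬝ᵥ v ≠ 0 := by
      simpa [dotProduct_self_eq_zero] using hv
    have ht0 : t₀ = 0 := by
      have : t₀ * (v ⬝ᵥ v) = 0 := by linarith
      exact (mul_eq_zero.1 this).resolve_right hvv
    have hz : p.eval t₀ = 0 := ht₀
    rw [ht0, h0] at hz
    exact absurd hz (ne_of_lt hlt)
  · -- odd: det A = 0
    have : A.det = -A.det := by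
      conv_lhs => rw [← Matrix.det_transpose, hA]
      rw [Matrix.det_neg, Fintype.card_fin, hn.neg_one_pow]
      ring
    have : A.det = 0 := by linarith
    rw [this] at hlt; exact absurd hlt (lt_irrefl 0)

/-- Let `V` be a nonsingular Seifert matrix with symmetric form `Q = V + Vᵀ` and
`T = V⁻¹Vᵀ` with characteristic polynomial `Δ_T(t) = det (T - t·I)`.  Then
`det (V + Vᵀ) = Δ_T(1) · Δ_T(-1)` up to a nonzero rational square. -/
theorem det_symmetric_form_eq_charpoly_values (g : ℕ)
    (V : Matrix (Fin (2 * g)) (Fin (2 * g)) ℤ)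
    (hS : (V - Vᵀ).det = 1 ∨ (V - Vᵀ).det = -1) (hV : V.det ≠ 0)
    (Vq : Matrix (Fin (2 * g)) (Fin (2 * g)) ℚ) (hVq : Vq = V.map (Int.cast : ℤ → ℚ))
    (T : Matrix (Fin (2 * g)) (Fin (2 * g)) ℚ) (hT : T = Vq⁻¹ * Vqᵀ)
    (ΔT : Polynomial ℚ) (hΔT : ΔT = ((T.map C) - (X : ℚ[X]) • (1 : Matrix (Fin (2 * g)) (Fin (2 * g)) ℚ[X])).det) :
    ∃ c : ℚ, c ≠ 0 ∧ (Vq + Vqᵀ).det = c ^ 2 * (ΔT.eval 1 * ΔT.eval (-1)) := by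
  -- rule out det (V - Vᵀ) = -1 using skew-symmetry over ℝ
  have hdet1 : (V - Vᵀ).det = 1 := by
    rcases hS with h | h
    · exact h
    · exfalso
      set A : Matrix (Fin (2*g)) (Fin (2*g)) ℝ := (V - Vᵀ).map (Int.cast : ℤ → ℝ) with hAdef
      have hskew : Aᵀ = -A := by
        ext i j
        simp only [hAdef, Matrix.transpose_apply, Matrix.map_apply, Matrix.neg_apply,
          Matrix.sub_apply]
        push_cast
        ring
      have hnn := skew_det_nonneg A hskew
      have hdA : A.det = ((V - Vᵀ).det : ℝ) := (RingHom.map_det (Int.castRingHom ℝ) (V - Vᵀ)).symm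
      rw [hdA, h] at hnn
      norm_num at hnn
  -- basic facts about Vq
  have hdq : Vq.det = (V.det : ℚ) := by
    rw [hVq]; exact (RingHom.map_det (Int.castRingHom ℚ) V).symm
  have hc : Vq.det ≠ 0 := by rw [hdq]; exact_mod_cast hV
  have hQskew : (Vq - Vqᵀ).det = 1 := by
    have : Vq - Vqᵀ = (V - Vᵀ).map (Int.cast : ℤ → ℚ) := by
      ext i j
      simp [hVq, Matrix.transpose_apply, Matrix.map_apply]
    have hmd : ((V - Vᵀ).map (Int.cast : ℤ → ℚ)).det = ((V - Vᵀ).det : ℚ) := by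
      have h := RingHom.map_det (Int.castRingHom ℚ) (V - Vᵀ)
      rwa [RingHom.mapMatrix_apply, Int.coe_castRingHom, eq_comm] at h
    rw [this, hmd, hdet1]
    norm_num
  -- evaluation of ΔT
  have heval : ∀ a : ℚ, ΔT.eval a = Vq.det⁻¹ * (Vqᵀ - a • Vq).det := by
    intro a
    have hmap : (T.map C - (X : ℚ[X]) • (1 : Matrix (Fin (2*g)) (Fin (2*g)) ℚ[X])).map (evalRingHom a)
        = T - a • (1 : Matrix (Fin (2*g)) (Fin (2*g)) ℚ) := by
      ext i j
      by_cases hij : i = j <;>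
        simp [Matrix.map_apply, Matrix.sub_apply, Matrix.smul_apply, Matrix.one_apply, hij]
    have h1 : ΔT.eval a = (T - a • (1 : Matrix (Fin (2*g)) (Fin (2*g)) ℚ)).det := by
      rw [hΔT, ← coe_evalRingHom, RingHom.map_det, RingHom.mapMatrix_apply, hmap]
    have h2 : T - a • (1 : Matrix (Fin (2*g)) (Fin (2*g)) ℚ) = Vq⁻¹ * (Vqᵀ - a • Vq) := by
      rw [Matrix.mul_sub, Matrix.mul_smul, Matrix.nonsing_inv_mul Vq (isUnit_iff_ne_zero.2 hc), hT]
    rw [h1, h2, Matrix.det_mul, Matrix.det_nonsing_inv, Ring.inverse_eq_inv']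
  have he1 : ΔT.eval 1 = Vq.det⁻¹ := by
    rw [heval 1, one_smul]
    have : Vqᵀ - Vq = -(Vq - Vqᵀ) := (neg_sub _ _).symm
    rw [this, Matrix.det_neg, hQskew, Fintype.card_fin, Even.neg_one_pow (even_two_mul g)]
    ring
  have he2 : ΔT.eval (-1) = Vq.det⁻¹ * (Vq + Vqᵀ).det := by
    rw [heval (-1), neg_one_smul, sub_neg_eq_add, add_comm]
  refine ⟨Vq.det, hc, ?_⟩
  rw [he1, he2]
  set d := Vq.det with hd
  generalize (Vq + Vqᵀ).det = D
  field_simp
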